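/- Let ρ : ℝ^d → ℝ be convex and positively homogeneous of degree one with dual set 𝒫 = {z ∈ ℝ^d : z·q ≤ ρ(q) for all q ∈ ℝ^d}, let K ⊂ ℝ^d be a nonempty compact convex set, define H(z) = min{z·q : q ∈ K}, and let q_0 ∈ ℝ^d. Suppose z* ∈ 𝒫 maximizes H(z) − z·q_0 over 𝒫, and that H is differentiable at z*. Then ρ(∇H(z*) − q_0) = H(z*) − z*·q_0; that is, the grid cost incurred when average consumption equals ∇H(z*) under the prices z* coincides with the optimal direct-control value max{H(z) − z·q_0 : z ∈ 𝒫}, so pricing with z* (or any positive multiple of it) closes the gap to direct control. -/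

import Mathlib

open scoped RealInnerProductSpace Pointwise

section Aux

variable {d : ℕ}

local notation "E" => EuclideanSpace ℝ (Fin d)

/-- Subgradient existence for a finite, convex, positively one-homogeneous function. -/
lemma exists_dual_point (ρ : EuclideanSpace ℝ (Fin d) → ℝ)
    (hconv : ConvexOn ℝ Set.univ ρ)
    (hhom : ∀ α : ℝ, 0 ≤ α → ∀ q, ρ (α • q) = α * ρ q) (p : E) :
    ∃ z : E, (∀ q, ⟪z, q⟫ ≤ ρ q) ∧ ⟪z, p⟫ = ρ p := by
  have hρ0 : ρ 0 = 0 := by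
    have := hhom 0 le_rfl 0
    simpa using this
  have hρcont : Continuous ρ := by
    exact continuousOn_univ.mp (hconv.continuousOn isOpen_univ)
  set s : Set (E × ℝ) := {x | ρ x.1 < x.2} with hs
  have hsconv : Convex ℝ s := by
    intro x hx y hy a b ha hb hab
    simp only [hs, Set.mem_setOf_eq] at *
    calc ρ (a • x.1 + b • y.1) ≤ a * ρ x.1 + b * ρ y.1 :=
          hconv.2 (Set.mem_univ _) (Set.mem_univ _) ha hb hab
      _ < a * x.2 + b * y.2 := by
          rcases eq_or_lt_of_le ha with h | h
          · rcases eq_or_lt_of_le hb with h' | h'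
            · exfalso; rw [← h, ← h'] at hab; simpa using hab
            · rw [← h]; simpa using (mul_lt_mul_of_pos_left hy h')
          · rcases eq_or_lt_of_le hb with h' | h'
            · rw [← h']; simpa using (mul_lt_mul_of_pos_left hx h)
            · exact add_lt_add (mul_lt_mul_of_pos_left hx h) (mul_lt_mul_of_pos_left hy h')
      _ = (a • x + b • y).2 := rfl
  have hsopen : IsOpen s := by
    have : s = (fun x : E × ℝ => ρ x.1 - x.2) ⁻¹' (Set.Iio 0) := by
      ext x; simp [hs, sub_neg]
    rw [this]
    exact ((hρcont.comp continuous_fst).sub continuous_snd).isOpen_preimage _ isOpen_Iio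
  have hps : ((p, ρ p) : E × ℝ) ∉ s := by simp [hs]
  obtain ⟨f, hf⟩ := geometric_hahn_banach_open_point hsconv hsopen hps
  set c : ℝ := f (0, 1) with hc
  have hsplit : ∀ (q : E) (r : ℝ), f (q, r) = f (q, 0) + r * c := by
    intro q r
    have : ((q, r) : E × ℝ) = (q, 0) + r • ((0 : E), (1 : ℝ)) := by
      simp [Prod.ext_iff]
    rw [this, map_add, map_smul, smul_eq_mul, hc]
  have hM : ∀ (q : E) (r : ℝ), ρ q < r → f (q, 0) + r * c < f (p, 0) + ρ p * c := by
    intro q r h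
    have h1 := hf (q, r) h
    have h2 : f ((p, ρ p) : E × ℝ) = f (p, 0) + ρ p * c := hsplit p (ρ p)
    rw [hsplit q r] at h1
    linarith [h1, h2.le, h2.ge]
  have hcneg : c < 0 := by
    have := hM p (ρ p + 1) (by linarith)
    nlinarith
  -- limit r → ρ q : nonstrict inequality
  have hle : ∀ q : E, f (q, 0) + ρ q * c ≤ f (p, 0) + ρ p * c := by
    intro q
    by_contra h
    push_neg at h
    set A := f (q, 0) + ρ q * c with hA
    set M := f (p, 0) + ρ p * c with hMdef
    have hAM : M < A := h
    have hε : (0:ℝ) < (A - M) / (-c) := div_pos (by linarith) (by linarith)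
    have hmm := hM q (ρ q + (A - M) / (-c)) (by linarith)
    have hcalc : ((A - M) / (-c)) * c = -(A - M) := by
      rw [div_mul_eq_mul_div, div_neg, mul_div_assoc, div_self (ne_of_lt hcneg), mul_one]
    nlinarith [hmm]
  -- homogeneity: f (q,0) + ρ q * c ≤ 0 for all q, and 0 ≤ M
  have h0M : 0 ≤ f (p, 0) + ρ p * c := by
    have := hle 0
    simpa [hρ0, Prod.mk_zero_zero] using this
  have hkey : ∀ q : E, f (q, 0) + ρ q * c ≤ 0 := by
    intro q
    by_contra h
    push_neg at h
    set A := f (q, 0) + ρ q * c with hA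
    set M := f (p, 0) + ρ p * c with hMdef
    set t : ℝ := (|M| + 1) / A with ht
    have htpos : 0 < t := by positivity
    have hscaled : f (t • q, 0) + ρ (t • q) * c ≤ M := hle (t • q)
    have h1 : f (t • q, 0) = t * f (q, 0) := by
      have : ((t • q, 0) : E × ℝ) = t • ((q, 0) : E × ℝ) := by simp [Prod.ext_iff]
      rw [this, map_smul, smul_eq_mul]
    have h2 : ρ (t • q) = t * ρ q := hhom t htpos.le q
    rw [h1, h2] at hscaled
    have h3 : t * A = |M| + 1 := by
      rw [ht]; field_simp
    nlinarith [le_abs_self M, hscaled]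
  -- build the dual vector
  set L : E →L[ℝ] ℝ := (-c)⁻¹ • (f.comp (ContinuousLinearMap.inl ℝ E ℝ)) with hL
  have hLapp : ∀ q : E, L q = (-c)⁻¹ * f (q, 0) := by
    intro q; simp [hL]
  refine ⟨(InnerProductSpace.toDual ℝ E).symm L, fun q => ?_, ?_⟩
  · rw [InnerProductSpace.toDual_symm_apply, hLapp]
    rw [inv_mul_le_iff₀ (by linarith : (0:ℝ) < -c)]
    nlinarith [hkey q]
  · rw [InnerProductSpace.toDual_symm_apply, hLapp]
    have h1 : f (p, 0) + ρ p * c ≤ 0 := hkey p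
    have h2 : f (p, 0) = ρ p * (-c) := by linarith
    rw [h2, mul_comm (ρ p) (-c), inv_mul_cancel_left₀ (show (-c) ≠ 0 by linarith)]

end Aux

/-- deterministic core of mean-field optimality of dynamic pricing:
with `ρ` convex and positively one-homogeneous, `𝒫` its dual set, `K` nonempty compact
convex, `H(z) = min{z·q : q ∈ K}`, and `q₀ ∈ ℝ^d`, if `z* ∈ 𝒫` maximizes `H(z) − z·q₀`
over `𝒫` and `H` is differentiable at `z*` with gradient `∇H(z*)`, then
`ρ(∇H(z*) − q₀) = H(z*) − z*·q₀`. -/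
theorem pricing_closes_gap (d : ℕ) (ρ : EuclideanSpace ℝ (Fin d) → ℝ)
    (hconv : ConvexOn ℝ Set.univ ρ)
    (hhom : ∀ α : ℝ, 0 ≤ α → ∀ q, ρ (α • q) = α * ρ q)
    (K : Set (EuclideanSpace ℝ (Fin d))) (hKne : K.Nonempty) (hKc : IsCompact K)
    (hKconv : Convex ℝ K) (q₀ : EuclideanSpace ℝ (Fin d))
    (H : EuclideanSpace ℝ (Fin d) → ℝ)
    (hH : ∀ z, H z = sInf ((fun q => ⟪z, q⟫) '' K))
    (zstar : EuclideanSpace ℝ (Fin d))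
    (hzP : ∀ q, ⟪zstar, q⟫ ≤ ρ q)
    (hmax : ∀ z : EuclideanSpace ℝ (Fin d), (∀ q, ⟪z, q⟫ ≤ ρ q) →
      H z - ⟪z, q₀⟫ ≤ H zstar - ⟪zstar, q₀⟫)
    (g : EuclideanSpace ℝ (Fin d)) (hg : HasGradientAt H g zstar) :
    ρ (g - q₀) = H zstar - ⟪zstar, q₀⟫ := by
  -- homogeneity of H
  have hHhom : ∀ t : ℝ, 0 ≤ t → ∀ z, H (t • z) = t * H z := by
    intro t ht z
    rw [hH, hH]
    have h1 : (fun q : EuclideanSpace ℝ (Fin d) => ⟪t • z, q⟫) '' K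
        = t • ((fun q => ⟪z, q⟫) '' K) := by
      rw [← Set.image_smul, ← Set.image_comp]
      refine Set.image_congr fun q _ => ?_
      simp [real_inner_smul_left, smul_eq_mul, Finset.mul_sum, mul_assoc]
    rw [h1, Real.sInf_smul_of_nonneg ht, smul_eq_mul]
  -- Euler relation: H zstar = ⟪g, zstar⟫
  have hEuler : H zstar = ⟪g, zstar⟫ := by
    have h1 : HasDerivAt (fun t : ℝ => t • zstar) ((1:ℝ) • zstar) 1 :=
      (hasDerivAt_id 1).smul_const zstar
    rw [one_smul] at h1
    have h2 : HasDerivAt (fun t : ℝ => H (t • zstar)) ⟪g, zstar⟫ 1 := by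
      have hg1 : HasFDerivAt H
          ((InnerProductSpace.toDual ℝ (EuclideanSpace ℝ (Fin d))) g)
          ((fun t : ℝ => t • zstar) 1) := by
        simpa using hg.hasFDerivAt
      have := hg1.comp_hasDerivAt 1 h1
      simpa [InnerProductSpace.toDual_apply_apply, Function.comp_def] using this
    have h3 : HasDerivAt (fun t : ℝ => t * H zstar) (H zstar) 1 := by
      simpa using (hasDerivAt_id (1:ℝ)).mul_const (H zstar)
    have h4 : HasDerivAt (fun t : ℝ => H (t • zstar)) (H zstar) 1 := by
      refine h3.congr_of_eventuallyEq ?_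
      filter_upwards [Ioi_mem_nhds (by norm_num : (0:ℝ) < 1)] with t ht
      exact (hHhom t (le_of_lt ht) zstar).symm ▸ rfl
    exact h4.unique h2
  -- first-order optimality
  have hfoo : ∀ z : EuclideanSpace ℝ (Fin d), (∀ q, ⟪z, q⟫ ≤ ρ q) →
      ⟪g, z - zstar⟫ ≤ ⟪z - zstar, q₀⟫ := by
    intro z hz
    set v := z - zstar with hv
    have hcurve : HasDerivAt (fun t : ℝ => zstar + t • v) v 0 := by
      have := ((hasDerivAt_id (0:ℝ)).smul_const v).const_add zstar
      simpa using this
    have hψ : HasDerivAt (fun t : ℝ => H (zstar + t • v)) ⟪g, v⟫ 0 := by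
      have hg0 : HasFDerivAt H
          ((InnerProductSpace.toDual ℝ (EuclideanSpace ℝ (Fin d))) g)
          ((fun t : ℝ => zstar + t • v) 0) := by
        simpa using hg.hasFDerivAt
      have := hg0.comp_hasDerivAt 0 hcurve
      simpa [InnerProductSpace.toDual_apply_apply, Function.comp_def] using this
    have hslope := hasDerivAt_iff_tendsto_slope.mp hψ
    have hmono : (nhdsWithin (0:ℝ) (Set.Ioi 0)) ≤ (nhdsWithin (0:ℝ) {(0:ℝ)}ᶜ) :=
      nhdsWithin_mono 0 (fun t ht => ne_of_gt ht)
    have hlim : Filter.Tendsto (slope (fun t : ℝ => H (zstar + t • v)) 0)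
        (nhdsWithin (0:ℝ) (Set.Ioi 0)) (nhds ⟪g, v⟫) := hslope.mono_left hmono
    refine le_of_tendsto hlim ?_
    filter_upwards [Ioc_mem_nhdsGT (by norm_num : (0:ℝ) < 1)] with t ht
    obtain ⟨ht0, ht1⟩ := ht
    have hzt : ∀ q, ⟪zstar + t • v, q⟫ ≤ ρ q := by
      intro q
      have : ⟪zstar + t • v, q⟫ = (1 - t) * ⟪zstar, q⟫ + t * ⟪z, q⟫ := by
        rw [inner_add_left, real_inner_smul_left, hv, inner_sub_left]
        ring
      rw [this]
      calc (1 - t) * ⟪zstar, q⟫ + t * ⟪z, q⟫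
          ≤ (1 - t) * ρ q + t * ρ q := by
            have := mul_le_mul_of_nonneg_left (hzP q) (by linarith : (0:ℝ) ≤ 1 - t)
            have := mul_le_mul_of_nonneg_left (hz q) ht0.le
            linarith
        _ = ρ q := by ring
    have hopt := hmax (zstar + t • v) hzt
    have hq : ⟪zstar + t • v, q₀⟫ = ⟪zstar, q₀⟫ + t * ⟪v, q₀⟫ := by
      rw [inner_add_left, real_inner_smul_left]
    have hbound : H (zstar + t • v) - H zstar ≤ t * ⟪v, q₀⟫ := by
      rw [hq] at hopt; linarith
    rw [slope_def_field]
    simp only [zero_smul, add_zero, sub_zero]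
    rw [div_le_iff₀ ht0]
    nlinarith [hbound]
  -- combine everything
  obtain ⟨zbar, hzbarP, hzbarp⟩ := exists_dual_point ρ hconv hhom (g - q₀)
  have h1 := hfoo zbar hzbarP
  have e1 : ⟪zbar, g - q₀⟫ = ⟪zbar, g⟫ - ⟪zbar, q₀⟫ := inner_sub_right _ _ _
  have e2 : ⟪zstar, g - q₀⟫ = ⟪zstar, g⟫ - ⟪zstar, q₀⟫ := inner_sub_right _ _ _
  have e3 : ⟪g, zbar - zstar⟫ = ⟪zbar, g⟫ - ⟪zstar, g⟫ := by
    rw [inner_sub_right, real_inner_comm g zbar, real_inner_comm g zstar]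
  have e4 : ⟪zbar - zstar, q₀⟫ = ⟪zbar, q₀⟫ - ⟪zstar, q₀⟫ := inner_sub_left _ _ _
  have e5 : ⟪zstar, g⟫ = H zstar := by rw [hEuler, real_inner_comm]
  have hub := hzP (g - q₀)
  linarith [hzbarp.le, hzbarp.ge]
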